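/- Assume σ ≥ 0 and 2σ+1 < δ_u < 3. If Σ_{q≥−1} λ_q^{−1+δ_u} a_q² < ∞, then the set of natural numbers q such that (L λ_{p−q})^σ λ_q^{−1} a_p < c ν for all integers p > q and λ_q^{−2} G_q < c ν is nonempty; that is, Λ_u < ∞. -/

import Mathlib

open scoped ENNReal

/-- The admissibility condition at level `q` in the definition of the abstract velocity
determining wavenumber (`λ_q = 2^q`): `(L λ_{p-q})^σ λ_q^{-1} a_p < c ν` for every
integer `p > q`, and `λ_q^{-2} G_q < c ν`. -/
def GoodU (L c ν σ : ℝ) (a G : ℤ → ℝ) (q : ℕ) : Prop :=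
  (∀ p : ℤ, (q : ℤ) < p →
      (L * (2:ℝ) ^ (p - (q : ℤ))) ^ σ * ((2:ℝ) ^ (q : ℤ))⁻¹ * a p < c * ν) ∧
    (((2:ℝ) ^ (q : ℤ)) ^ 2)⁻¹ * G q < c * ν

/-- The abstract velocity determining wavenumber `Λ_u = λ_Q = 2^Q`, where `Q` is the
least admissible natural number; `Λ_u = ∞` if no natural number is admissible. -/
noncomputable def LambdaU (L c ν σ : ℝ) (a G : ℤ → ℝ) : ℝ≥0∞ :=
  sInf {x : ℝ≥0∞ | ∃ q : ℕ, GoodU L c ν σ a G q ∧ x = 2 ^ q}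

set_option maxHeartbeats 1000000 in
/-- if `σ ≥ 0`, `2σ+1 < δ_u < 3`, and the weighted sum
`Σ_{q ≥ -1} λ_q^{-1+δ_u} a_q²` is finite, then some natural number `q` satisfies both
conditions in the definition of the velocity determining wavenumber; that is, `Λ_u < ∞`. -/
theorem velocity_wavenumber_finite
    (L c ν σ δu CB : ℝ) (hL : 1 ≤ L) (hc : 0 < c) (hν : 0 < ν)
    (hσ : 0 ≤ σ) (hδu1 : 2 * σ + 1 < δu) (hδu3 : δu < 3) (hCB : 0 < CB)
    (a G : ℤ → ℝ)
    (ha0 : ∀ q : ℤ, -1 ≤ q → 0 ≤ a q)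
    (hG0 : ∀ q : ℤ, -1 ≤ q → 0 ≤ G q)
    (hBern : ∀ q : ℤ, -1 ≤ q →
      G q ≤ CB * ∑ p ∈ Finset.Icc (-1 : ℤ) q, (2:ℝ) ^ p * a p)
    (hS : (∑' n : ℕ,
        ENNReal.ofReal
          (((2:ℝ) ^ ((n : ℤ) - 1)) ^ (-1 + δu) * a ((n : ℤ) - 1) ^ 2)) ≠ ⊤) :
    (∃ q : ℕ, GoodU L c ν σ a G q) ∧ LambdaU L c ν σ a G ≠ ⊤ := by
  have h2 : (0:ℝ) < 2 := by norm_num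
  have h12 : (1:ℝ) ≤ 2 := by norm_num
  have hL0 : (0:ℝ) ≤ L := le_trans zero_le_one hL
  set K : ℝ := (∑' n : ℕ,
      ENNReal.ofReal
        (((2:ℝ) ^ ((n : ℤ) - 1)) ^ (-1 + δu) * a ((n : ℤ) - 1) ^ 2)).toReal with hKdef
  have hK0 : 0 ≤ K := ENNReal.toReal_nonneg
  set M : ℝ := Real.sqrt K with hMdef
  have hM0 : 0 ≤ M := Real.sqrt_nonneg K
  -- each term is bounded by K
  have hterm : ∀ p : ℤ, -1 ≤ p → ((2:ℝ) ^ p) ^ (-1 + δu) * a p ^ 2 ≤ K := by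
    intro p hp
    have hn : (((p + 1).toNat : ℤ)) - 1 = p := by omega
    have hle := ENNReal.le_tsum (f := fun n : ℕ =>
      ENNReal.ofReal (((2:ℝ) ^ ((n : ℤ) - 1)) ^ (-1 + δu) * a ((n : ℤ) - 1) ^ 2)) (p + 1).toNat
    simp only [hn] at hle
    have hnn : 0 ≤ ((2:ℝ) ^ p) ^ (-1 + δu) * a p ^ 2 :=
      mul_nonneg (Real.rpow_nonneg (by positivity) _) (sq_nonneg _)
    have h := ENNReal.toReal_mono hS hle
    rwa [ENNReal.toReal_ofReal hnn] at h
  -- pointwise bound on a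
  have haB : ∀ p : ℤ, -1 ≤ p → a p ≤ M * (2:ℝ) ^ ((p : ℝ) * ((1 - δu) / 2)) := by
    intro p hp
    have h1 := hterm p hp
    rw [← Real.rpow_intCast 2 p, ← Real.rpow_mul h2.le] at h1
    have hpos : (0:ℝ) < (2:ℝ) ^ ((p:ℝ) * (-1 + δu)) := Real.rpow_pos_of_pos h2 _
    have h2' : a p ^ 2 ≤ K * (2:ℝ) ^ ((p:ℝ) * (1 - δu)) := by
      have hx : (2:ℝ) ^ ((p:ℝ) * (-1 + δu)) * (2:ℝ) ^ ((p:ℝ) * (1 - δu)) = 1 := by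
        rw [← Real.rpow_add h2, show (p:ℝ) * (-1 + δu) + (p:ℝ) * (1 - δu) = 0 from by ring,
          Real.rpow_zero]
      nlinarith [Real.rpow_pos_of_pos h2 ((p:ℝ) * (1 - δu))]
    have h3 : a p ≤ Real.sqrt (K * (2:ℝ) ^ ((p:ℝ) * (1 - δu))) := by
      have h4 := Real.sqrt_le_sqrt h2'
      rwa [Real.sqrt_sq (ha0 p hp)] at h4
    rw [Real.sqrt_mul hK0] at h3
    refine h3.trans_eq ?_
    rw [← hMdef, Real.sqrt_eq_rpow, ← Real.rpow_mul h2.le]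
    congr 1
    ring
  -- constants
  have hδ1 : (1:ℝ) < δu := by nlinarith
  set ε : ℝ := (δu - 1) / 2 with hεdef
  have hε : 0 < ε := by simp only [hεdef]; linarith
  set γ : ℝ := (1 + δu) / 2 with hγdef
  have hγε : γ = ε + 1 := by simp only [hεdef, hγdef]; ring
  set α : ℝ := σ + (1 - δu) / 2 with hαdef
  have hα : α < 0 := by simp only [hαdef]; linarith
  set C1 : ℝ := L ^ σ * M * (2:ℝ) ^ α with hC1def
  have hC10 : 0 ≤ C1 := by
    have := Real.rpow_nonneg hL0 σ
    have := (Real.rpow_pos_of_pos h2 α).le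
    positivity
  set C2 : ℝ := 2 * CB * M with hC2def
  have hC20 : 0 ≤ C2 := by positivity
  set C : ℝ := max C1 C2 with hCdef
  have hcν : 0 < c * ν := mul_pos hc hν
  obtain ⟨q, hq⟩ := pow_unbounded_of_one_lt (C / (c * ν))
    (y := (2:ℝ) ^ ε) ((Real.one_lt_rpow_iff_of_pos h2).2 (Or.inl ⟨by norm_num, hε⟩))
  have hqkey : C * (2:ℝ) ^ (-((q:ℝ) * ε)) < c * ν := by
    have h5 : ((2:ℝ) ^ ε) ^ q = (2:ℝ) ^ ((q:ℝ) * ε) := by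
      rw [← Real.rpow_natCast ((2:ℝ) ^ ε) q, ← Real.rpow_mul h2.le]
      congr 1; ring
    rw [h5] at hq
    have h6 : C < (2:ℝ) ^ ((q:ℝ) * ε) * (c * ν) := (div_lt_iff₀ hcν).1 hq
    have h7 : (0:ℝ) < (2:ℝ) ^ (-((q:ℝ) * ε)) := Real.rpow_pos_of_pos h2 _
    have h8 : (2:ℝ) ^ ((q:ℝ) * ε) * (2:ℝ) ^ (-((q:ℝ) * ε)) = 1 := by
      rw [← Real.rpow_add h2]; norm_num
    nlinarith
  have hmain : ∀ D x : ℝ, 0 ≤ D → D ≤ C → x ≤ -((q:ℝ) * ε) → D * (2:ℝ) ^ x < c * ν := by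
    intro D x hD0 hD hx
    calc D * (2:ℝ) ^ x ≤ C * (2:ℝ) ^ (-((q:ℝ) * ε)) :=
          mul_le_mul hD (Real.rpow_le_rpow_of_exponent_le h12 hx)
            (Real.rpow_nonneg h2.le x) (le_trans hD0 hD)
      _ < c * ν := hqkey
  have hgood : GoodU L c ν σ a G q := by
    constructor
    · -- first condition
      intro p hp
      have hp1 : (-1:ℤ) ≤ p := by omega
      have hap := haB p hp1
      have hap0 := ha0 p hp1
      have hfac0 : 0 ≤ (L * (2:ℝ) ^ (p - (q:ℤ))) ^ σ * ((2:ℝ) ^ (q:ℤ))⁻¹ := by positivity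
      calc (L * (2:ℝ) ^ (p - (q:ℤ))) ^ σ * ((2:ℝ) ^ (q:ℤ))⁻¹ * a p
          ≤ (L * (2:ℝ) ^ (p - (q:ℤ))) ^ σ * ((2:ℝ) ^ (q:ℤ))⁻¹ *
            (M * (2:ℝ) ^ ((p:ℝ) * ((1 - δu) / 2))) := by
            exact mul_le_mul_of_nonneg_left hap hfac0
        _ = (L ^ σ * M) * (2:ℝ) ^ (((p:ℝ) - (q:ℝ)) * σ + (-(q:ℝ)) + (p:ℝ) * ((1 - δu) / 2)) := by
            rw [← Real.rpow_intCast 2 (p - (q:ℤ)), ← Real.rpow_intCast 2 (q:ℤ)]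
            push_cast
            rw [Real.mul_rpow hL0 (Real.rpow_nonneg h2.le _),
              ← Real.rpow_mul h2.le, ← Real.rpow_neg h2.le,
              Real.rpow_add h2, Real.rpow_add h2]
            ring
        _ ≤ (L ^ σ * M) * (2:ℝ) ^ (α - (q:ℝ) * γ) := by
            refine mul_le_mul_of_nonneg_left (Real.rpow_le_rpow_of_exponent_le h12 ?_)
              (by positivity)
            have hpq : (q:ℝ) + 1 ≤ (p:ℝ) := by exact_mod_cast hp
            have hh : ((p:ℝ) - ((q:ℝ) + 1)) * α ≤ 0 :=
              mul_nonpos_of_nonneg_of_nonpos (by linarith) hα.le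
            simp only [hαdef, hγdef] at hh ⊢
            nlinarith
        _ = C1 * (2:ℝ) ^ (-((q:ℝ) * γ)) := by
            rw [hC1def, show α - (q:ℝ) * γ = α + -((q:ℝ) * γ) from by ring,
              Real.rpow_add h2]
            ring
        _ < c * ν := by
            refine hmain C1 _ hC10 (le_max_left _ _) ?_
            have : (q:ℝ) * ε ≤ (q:ℝ) * γ := by
              refine mul_le_mul_of_nonneg_left ?_ (Nat.cast_nonneg q)
              rw [hγε]; linarith
            linarith
    · -- second condition
      have hq1 : (-1:ℤ) ≤ (q:ℤ) := by omega
      have hGb := hBern q hq1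
      have hsum : ∑ p ∈ Finset.Icc (-1:ℤ) (q:ℤ), (2:ℝ) ^ p * a p ≤
          ((q:ℝ) + 2) * (M * (2:ℝ) ^ ((q:ℝ) * ((3 - δu) / 2))) := by
        have hstep : ∀ p ∈ Finset.Icc (-1:ℤ) (q:ℤ),
            (2:ℝ) ^ p * a p ≤ M * (2:ℝ) ^ ((q:ℝ) * ((3 - δu) / 2)) := by
          intro p hpmem
          rw [Finset.mem_Icc] at hpmem
          have hple : (p:ℝ) ≤ (q:ℝ) := by exact_mod_cast hpmem.2
          have h1 : (2:ℝ) ^ p * a p ≤ (2:ℝ) ^ p * (M * (2:ℝ) ^ ((p:ℝ) * ((1 - δu) / 2))) :=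
            mul_le_mul_of_nonneg_left (haB p hpmem.1) (by positivity)
          refine h1.trans ?_
          rw [← Real.rpow_intCast 2 p]
          rw [show ((2:ℝ) ^ ((p:ℤ):ℝ) * (M * (2:ℝ) ^ ((p:ℝ) * ((1 - δu) / 2)))) =
            M * (2:ℝ) ^ ((p:ℝ) + (p:ℝ) * ((1 - δu) / 2)) from by
              rw [Real.rpow_add h2]; push_cast; ring]
          refine mul_le_mul_of_nonneg_left (Real.rpow_le_rpow_of_exponent_le h12 ?_) hM0
          nlinarith
        calc ∑ p ∈ Finset.Icc (-1:ℤ) (q:ℤ), (2:ℝ) ^ p * a p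
            ≤ ∑ _p ∈ Finset.Icc (-1:ℤ) (q:ℤ), M * (2:ℝ) ^ ((q:ℝ) * ((3 - δu) / 2)) :=
              Finset.sum_le_sum hstep
          _ = ((q:ℝ) + 2) * (M * (2:ℝ) ^ ((q:ℝ) * ((3 - δu) / 2))) := by
              rw [Finset.sum_const, Int.card_Icc]
              have : ((q:ℤ) + 1 - (-1)).toNat = q + 2 := by omega
              rw [this]
              push_cast
              ring
      have hG1 : G (q:ℤ) ≤ CB * (((q:ℝ) + 2) * (M * (2:ℝ) ^ ((q:ℝ) * ((3 - δu) / 2)))) :=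
        hGb.trans (mul_le_mul_of_nonneg_left hsum hCB.le)
      have hq2 : ((q:ℝ) + 2) ≤ 2 * (2:ℝ) ^ ((q:ℝ)) := by
        have hn : (q:ℕ) + 2 ≤ 2 * 2 ^ q := by
          have := Nat.lt_two_pow_self (n := q + 1)
          calc q + 2 ≤ 2 ^ (q + 1) := this
            _ = 2 * 2 ^ q := by ring
        have hcast : ((q:ℝ) + 2) ≤ 2 * (2:ℝ) ^ (q:ℕ) := by exact_mod_cast hn
        rwa [← Real.rpow_natCast 2 q] at hcast
      have hinv : (((2:ℝ) ^ ((q:ℕ):ℤ)) ^ 2)⁻¹ = (2:ℝ) ^ (-(2 * (q:ℝ))) := by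
        rw [← Real.rpow_intCast 2 ((q:ℕ):ℤ), ← Real.rpow_natCast _ 2,
          ← Real.rpow_mul h2.le, ← Real.rpow_neg h2.le]
        push_cast
        ring_nf
      calc (((2:ℝ) ^ ((q:ℕ):ℤ)) ^ 2)⁻¹ * G (q:ℤ)
          ≤ (((2:ℝ) ^ ((q:ℕ):ℤ)) ^ 2)⁻¹ *
            (CB * (((q:ℝ) + 2) * (M * (2:ℝ) ^ ((q:ℝ) * ((3 - δu) / 2))))) :=
            mul_le_mul_of_nonneg_left hG1 (by positivity)
        _ ≤ (((2:ℝ) ^ ((q:ℕ):ℤ)) ^ 2)⁻¹ *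
            (CB * ((2 * (2:ℝ) ^ ((q:ℝ))) * (M * (2:ℝ) ^ ((q:ℝ) * ((3 - δu) / 2))))) := by
            have hpos : (0:ℝ) < (((2:ℝ) ^ ((q:ℕ):ℤ)) ^ 2)⁻¹ := by positivity
            refine mul_le_mul_of_nonneg_left ?_ hpos.le
            refine mul_le_mul_of_nonneg_left ?_ hCB.le
            refine mul_le_mul_of_nonneg_right hq2 (by positivity)
        _ = C2 * (2:ℝ) ^ (-((q:ℝ) * ε)) := by
            rw [hinv, hC2def]
            rw [show (2:ℝ) ^ (-(2 * (q:ℝ))) *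
                (CB * ((2 * (2:ℝ) ^ ((q:ℝ))) * (M * (2:ℝ) ^ ((q:ℝ) * ((3 - δu) / 2))))) =
                (2 * CB * M) * ((2:ℝ) ^ (-(2 * (q:ℝ))) * (2:ℝ) ^ ((q:ℝ)) *
                  (2:ℝ) ^ ((q:ℝ) * ((3 - δu) / 2))) from by ring]
            rw [← Real.rpow_add h2, ← Real.rpow_add h2]
            congr 1
            simp only [hεdef]
            ring
        _ < c * ν := hmain C2 _ hC20 (le_max_right _ _) le_rfl
  refine ⟨⟨q, hgood⟩, ?_⟩
  have hle : LambdaU L c ν σ a G ≤ 2 ^ q := sInf_le ⟨q, hgood, rfl⟩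
  exact ne_top_of_le_ne_top (ENNReal.pow_ne_top ENNReal.ofNat_ne_top) hle
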